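/- Let μ : ℝ → ℝ be C¹, increasing, concave on [0,∞) with μ(0)=0, and define β(σ,s) = μ(s)(σ - s). For every σ > 0 there exists a unique ŝ(σ) ∈ (0,σ) maximizing s ↦ β(σ,s) over [0,σ], and at this maximizer μ(ŝ(σ)) = μ'(ŝ(σ))(σ - ŝ(σ)). -/

import Mathlib

/-- Strict midpoint inequality for β on [0,σ]. -/
lemma beta_mid {μ : ℝ → ℝ} (hmono : StrictMonoOn μ (Set.Ici 0))
    (hconc : ConcaveOn ℝ (Set.Ici 0) μ) (h0 : μ 0 = 0)
    {σ x y : ℝ} (hx : x ∈ Set.Ioo 0 σ) (hy : y ∈ Set.Ioo 0 σ) (hxy : x < y) :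
    (μ x * (σ - x) + μ y * (σ - y)) / 2 < μ ((x + y) / 2) * (σ - (x + y) / 2) := by
  have hx0 : (0:ℝ) ≤ x := le_of_lt hx.1
  have hy0 : (0:ℝ) ≤ y := le_of_lt hy.1
  have hmem : (x + y) / 2 ∈ Set.Ici (0:ℝ) := by
    simp only [Set.mem_Ici]; linarith
  have hμxy : μ x < μ y := hmono hx0 hy0 hxy
  have hμx : 0 < μ x := by
    have := hmono (Set.mem_Ici.mpr (le_refl (0:ℝ))) hx0 hx.1
    rwa [h0] at this
  have hconcmid := hconc.2 (Set.mem_Ici.mpr hx0) (Set.mem_Ici.mpr hy0)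
    (by norm_num : (0:ℝ) ≤ 1/2) (by norm_num : (0:ℝ) ≤ 1/2) (by norm_num)
  simp only [smul_eq_mul] at hconcmid
  have hmid : (μ x + μ y) / 2 ≤ μ ((x + y) / 2) := by
    have : (1:ℝ)/2 * x + 1/2 * y = (x + y) / 2 := by ring
    rw [this] at hconcmid; linarith
  have hσm : 0 < σ - (x + y) / 2 := by
    have := hy.2; have := hx.2; linarith
  nlinarith [mul_le_mul_of_nonneg_right hmid (le_of_lt hσm),
    mul_pos (sub_pos.mpr hμxy) (sub_pos.mpr hxy)]

/-- For μ C¹, increasing, concave with μ(0)=0 and β(σ,s)=μ(s)(σ-s), for every σ>0 there is a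
    unique ŝ ∈ (0,σ) maximizing β(σ,·) over [0,σ], and there μ(ŝ) = μ'(ŝ)(σ-ŝ). -/
theorem stmt1 (μ : ℝ → ℝ)
    (hC1 : ContDiff ℝ 1 μ)
    (hmono : StrictMonoOn μ (Set.Ici 0))
    (hconc : ConcaveOn ℝ (Set.Ici 0) μ)
    (h0 : μ 0 = 0)
    (σ : ℝ) (hσ : 0 < σ) :
    ∃! s : ℝ, s ∈ Set.Ioo 0 σ ∧
      IsMaxOn (fun s : ℝ => μ s * (σ - s)) (Set.Icc 0 σ) s ∧
      μ s = deriv μ s * (σ - s) := by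
  set β : ℝ → ℝ := fun s => μ s * (σ - s) with hβ
  have hμcont : Continuous μ := hC1.continuous
  have hβcont : Continuous β := by
    exact hμcont.mul (continuous_const.sub continuous_id)
  -- existence of a maximizer
  obtain ⟨s₀, hs₀mem, hs₀max⟩ := (isCompact_Icc (a := (0:ℝ)) (b := σ)).exists_isMaxOn
    (Set.nonempty_Icc.mpr (le_of_lt hσ)) hβcont.continuousOn
  -- β (σ/2) > 0
  have hhalf : σ/2 ∈ Set.Icc (0:ℝ) σ := by constructor <;> linarith
  have hβhalf : 0 < β (σ/2) := by
    have hμ : 0 < μ (σ/2) := by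
      have := hmono (Set.mem_Ici.mpr (le_refl (0:ℝ))) (by linarith : (0:ℝ) ≤ σ/2) (by linarith)
      rwa [h0] at this
    have : (0:ℝ) < σ - σ/2 := by linarith
    exact mul_pos hμ this
  have hβs₀pos : 0 < β s₀ := lt_of_lt_of_le hβhalf (hs₀max hhalf)
  -- s₀ ∈ Ioo 0 σ
  have hs₀Ioo : s₀ ∈ Set.Ioo 0 σ := by
    rcases hs₀mem with ⟨h1, h2⟩
    constructor
    · rcases lt_or_eq_of_le h1 with h | h
      · exact h
      · exfalso; rw [← h] at hβs₀pos; simp [hβ, h0] at hβs₀pos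
    · rcases lt_or_eq_of_le h2 with h | h
      · exact h
      · exfalso; rw [h] at hβs₀pos; simp [hβ] at hβs₀pos
  -- first-order condition
  have hdiff : DifferentiableAt ℝ μ s₀ := (hC1.differentiable one_ne_zero).differentiableAt
  have hder : HasDerivAt β (deriv μ s₀ * (σ - s₀) + μ s₀ * (-1)) s₀ := by
    exact hdiff.hasDerivAt.mul ((hasDerivAt_id s₀).const_sub σ)
  have hnhds : Set.Icc (0:ℝ) σ ∈ nhds s₀ :=
    Filter.mem_of_superset (Ioo_mem_nhds hs₀Ioo.1 hs₀Ioo.2) Set.Ioo_subset_Icc_self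
  have hloc : IsLocalMax β s₀ := hs₀max.isLocalMax hnhds
  have hderiv0 : deriv μ s₀ * (σ - s₀) + μ s₀ * (-1) = 0 := by
    have := hloc.hasDerivAt_eq_zero hder
    exact this
  have hfoc : μ s₀ = deriv μ s₀ * (σ - s₀) := by linarith
  refine ⟨s₀, ⟨hs₀Ioo, hs₀max, hfoc⟩, ?_⟩
  rintro s' ⟨hs'Ioo, hs'max, -⟩
  by_contra hne
  -- two distinct maximizers; midpoint beats max value
  rcases lt_or_gt_of_ne hne with h | h
  · have hkey := beta_mid hmono hconc h0 hs'Ioo hs₀Ioo h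
    have hm : (s' + s₀) / 2 ∈ Set.Icc (0:ℝ) σ := by
      constructor
      · have := hs'Ioo.1; have := hs₀Ioo.1; linarith
      · have := hs'Ioo.2; have := hs₀Ioo.2; linarith
    have h1 : β ((s' + s₀)/2) ≤ β s₀ := hs₀max hm
    have h2 : β s₀ ≤ β s' := hs'max (Set.Ioo_subset_Icc_self hs₀Ioo)
    have h3 : β s' ≤ β s₀ := hs₀max (Set.Ioo_subset_Icc_self hs'Ioo)
    simp only [hβ] at h1 h2 h3 hkey
    linarith
  · have hkey := beta_mid hmono hconc h0 hs₀Ioo hs'Ioo h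
    have hm : (s₀ + s') / 2 ∈ Set.Icc (0:ℝ) σ := by
      constructor
      · have := hs'Ioo.1; have := hs₀Ioo.1; linarith
      · have := hs'Ioo.2; have := hs₀Ioo.2; linarith
    have h1 : β ((s₀ + s')/2) ≤ β s₀ := hs₀max hm
    have h2 : β s₀ ≤ β s' := hs'max (Set.Ioo_subset_Icc_self hs₀Ioo)
    have h3 : β s' ≤ β s₀ := hs₀max (Set.Ioo_subset_Icc_self hs'Ioo)
    simp only [hβ] at h1 h2 h3 hkey
    linarith
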